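/- Work over the ring k[ε]/(ε³), where ε is a central variable with ε³ = 0. Let A ∈ 𝒜₂(k) and let f₁, f₂ ∈ k[x₁,x₂,p₁,p₂][[h]]. Set R := φ(A)·exp(ε·N(f₁ + ε·f₂)), where the exponential is the finite sum 1 + ε·N(f₁+εf₂) + (ε²/2)·N(f₁)². Then R is invertible and, modulo ε³, for j = 1, 2: R·x_j·R^{−1} = Σ_{i=1}^2 x_i·A_{ij} + ε·φ(A)·N(∂_{p_j} f₁ + ε·∂_{p_j} f₂)·φ(A)^{−1} + (ε²/2)·φ(A)·[N(f₁), N(∂_{p_j} f₁)]·φ(A)^{−1}, where [a,b] = ab − ba and ∂_{p_j} denotes the partial derivative in the commutative polynomial algebra. -/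

import Mathlib

open PowerSeries

noncomputable section

/-- Exponential of a formal power series with coefficients in a (possibly noncommutative)
ℚ-algebra; intended for series with zero constant term. -/
def psExp {B : Type*} [Ring B] [Algebra ℚ B] (a : PowerSeries B) : PowerSeries B :=
  PowerSeries.mk fun m =>
    ∑ r ∈ Finset.range (m + 1), (r.factorial : ℚ)⁻¹ • (PowerSeries.coeff m (a ^ r))

/-- Coefficientwise extension of a map `R → S` to formal power series. -/
def liftFun {R S : Type*} [Semiring R] [Semiring S] (f : R → S) (g : PowerSeries R) :
    PowerSeries S :=
  PowerSeries.mk fun m => f (PowerSeries.coeff m g)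

/-- The normal-ordering property of a map `N : k[x_1,…,x_n,p_1,…,p_n] → A_n(k)`. -/
def IsNormalOrdering {k : Type*} [Field k] {n : ℕ} {B : Type*} [Ring B] [Algebra k B]
    (x p : Fin n → B) (N : MvPolynomial (Fin n ⊕ Fin n) k →ₗ[k] B) : Prop :=
  ∀ d : (Fin n ⊕ Fin n) →₀ ℕ,
    N (MvPolynomial.monomial d 1) =
      ((List.finRange n).map fun i => x i ^ d (Sum.inl i)).prod *
        ((List.finRange n).map fun i => p i ^ d (Sum.inr i)).prod

/-- `A ≡ 𝟙 (mod h)`, i.e. membership of `A` in `𝒜_n(k)`. -/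
def IsOneModH {k : Type*} [CommRing k] {n : ℕ}
    (A : Matrix (Fin n) (Fin n) (PowerSeries k)) : Prop :=
  ∀ i j, PowerSeries.constantCoeff (A i j) = if i = j then 1 else 0

/-- `φ(A) := N(exp(Σ_{i,j} x_i (A − 𝟙)_{ij} p_j))`. -/
def phiMat {k : Type*} [Field k] [CharZero k] {n : ℕ} {B : Type*} [Ring B] [Algebra k B]
    (N : MvPolynomial (Fin n ⊕ Fin n) k →ₗ[k] B)
    (A : Matrix (Fin n) (Fin n) (PowerSeries k)) : PowerSeries B :=
  liftFun N (psExp (∑ i : Fin n, ∑ j : Fin n,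
    PowerSeries.C (R := MvPolynomial (Fin n ⊕ Fin n) k)
        (MvPolynomial.X (Sum.inl i) * MvPolynomial.X (Sum.inr j)) *
      PowerSeries.map (MvPolynomial.C) ((A - 1) i j)))

/-- Coefficientwise extension of the partial derivative `∂/∂p_j` to
`k[x_1,…,x_n,p_1,…,p_n][[h]]`. -/
def pdLift {k : Type*} [Field k] {n : ℕ} (j : Fin n)
    (f : PowerSeries (MvPolynomial (Fin n ⊕ Fin n) k)) :
    PowerSeries (MvPolynomial (Fin n ⊕ Fin n) k) :=
  PowerSeries.mk fun m =>
    MvPolynomial.pderiv (Sum.inr j) (PowerSeries.coeff (R := MvPolynomial (Fin n ⊕ Fin n) k) m f)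


lemma aux_coeff_pow_eq_zero {B : Type*} [Ring B] {f : PowerSeries B}
    (hf : constantCoeff (R := B) f = 0) : ∀ r m : ℕ, m < r → coeff (R := B) m (f ^ r) = 0 := by
  intro r
  induction r with
  | zero => intro m hm; omega
  | succ r ih =>
    intro m hm
    rw [pow_succ', coeff_mul]
    apply Finset.sum_eq_zero
    rintro ⟨a, b⟩ hab
    rw [Finset.HasAntidiagonal.mem_antidiagonal] at hab
    rcases Nat.eq_zero_or_pos a with h0 | h0
    · subst h0
      simp only [coeff_zero_eq_constantCoeff, hf, zero_mul]
    · rw [ih b (by omega), mul_zero]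

lemma aux_mul_S {B : Type*} [Ring B] (f : PowerSeries B)
    (hnf : constantCoeff (R := B) (-f) = 0) (m : ℕ) :
    coeff (R := B) m (f * PowerSeries.mk (fun m' => ∑ r ∈ Finset.range (m' + 1), coeff (R := B) m' ((-f) ^ r)))
      = (coeff (R := B) m 1) - ∑ r ∈ Finset.range (m + 1), coeff (R := B) m ((-f) ^ r) := by
  rw [coeff_mul]
  have step1 : ∀ q ∈ Finset.HasAntidiagonal.antidiagonal m,
      coeff (R := B) q.1 f * coeff (R := B) q.2 (PowerSeries.mk (fun m' => ∑ r ∈ Finset.range (m' + 1), coeff (R := B) m' ((-f) ^ r)))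
        = ∑ r ∈ Finset.range (m + 1), coeff (R := B) q.1 f * coeff (R := B) q.2 ((-f) ^ r) := by
    rintro ⟨a, b⟩ hab
    rw [Finset.HasAntidiagonal.mem_antidiagonal] at hab
    rw [coeff_mk, Finset.mul_sum]
    apply Finset.sum_subset
    · intro r hr; rw [Finset.mem_range] at *; omega
    · intro r hr hr'
      rw [Finset.mem_range] at hr hr'
      rw [aux_coeff_pow_eq_zero hnf r b (by omega), mul_zero]
  rw [Finset.sum_congr rfl step1, Finset.sum_comm]
  have step2 : ∀ r ∈ Finset.range (m+1),
      (∑ q ∈ Finset.HasAntidiagonal.antidiagonal m, coeff (R := B) q.1 f * coeff (R := B) q.2 ((-f)^r))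
      = - coeff (R := B) m ((-f) ^ (r+1)) := by
    intro r _
    rw [← coeff_mul, pow_succ']
    have : f * (-f) ^ r = -(-f * (-f)^r) := by rw [neg_mul, neg_neg]
    rw [this, map_neg]
  rw [Finset.sum_congr rfl step2, Finset.sum_neg_distrib]
  have step3 : (∑ r ∈ Finset.range (m+1), coeff (R := B) m ((-f)^(r+1)))
      = (∑ r ∈ Finset.range (m+2), coeff (R := B) m ((-f)^r)) - coeff (R := B) m ((-f)^0) := by
    rw [Finset.sum_range_succ' (fun r => coeff (R := B) m ((-f)^r)) (m+1)]
    abel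
  rw [step3, Finset.sum_range_succ, aux_coeff_pow_eq_zero hnf (m+1) m (by omega), add_zero,
    pow_zero, coeff_one]

  abel

lemma aux_S_mul {B : Type*} [Ring B] (f : PowerSeries B)
    (hnf : constantCoeff (R := B) (-f) = 0) (m : ℕ) :
    coeff (R := B) m (PowerSeries.mk (fun m' => ∑ r ∈ Finset.range (m' + 1), coeff (R := B) m' ((-f) ^ r)) * f)
      = (coeff (R := B) m 1) - ∑ r ∈ Finset.range (m + 1), coeff (R := B) m ((-f) ^ r) := by
  rw [coeff_mul]
  have step1 : ∀ q ∈ Finset.HasAntidiagonal.antidiagonal m,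
      coeff (R := B) q.1 (PowerSeries.mk (fun m' => ∑ r ∈ Finset.range (m' + 1), coeff (R := B) m' ((-f) ^ r))) * coeff (R := B) q.2 f
        = ∑ r ∈ Finset.range (m + 1), coeff (R := B) q.1 ((-f) ^ r) * coeff (R := B) q.2 f := by
    rintro ⟨a, b⟩ hab
    rw [Finset.HasAntidiagonal.mem_antidiagonal] at hab
    rw [coeff_mk, Finset.sum_mul]
    apply Finset.sum_subset
    · intro r hr; rw [Finset.mem_range] at *; omega
    · intro r hr hr'
      rw [Finset.mem_range] at hr hr'
      rw [aux_coeff_pow_eq_zero hnf r a (by omega), zero_mul]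
  rw [Finset.sum_congr rfl step1, Finset.sum_comm]
  have step2 : ∀ r ∈ Finset.range (m+1),
      (∑ q ∈ Finset.HasAntidiagonal.antidiagonal m, coeff (R := B) q.1 ((-f)^r) * coeff (R := B) q.2 f)
      = - coeff (R := B) m ((-f) ^ (r+1)) := by
    intro r _
    rw [← coeff_mul, pow_succ]
    have : (-f) ^ r * f = -((-f)^r * -f) := by rw [mul_neg, neg_neg]
    rw [this, map_neg]
  rw [Finset.sum_congr rfl step2, Finset.sum_neg_distrib]
  have step3 : (∑ r ∈ Finset.range (m+1), coeff (R := B) m ((-f)^(r+1)))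
      = (∑ r ∈ Finset.range (m+2), coeff (R := B) m ((-f)^r)) - coeff (R := B) m ((-f)^0) := by
    rw [Finset.sum_range_succ' (fun r => coeff (R := B) m ((-f)^r)) (m+1)]
    abel
  rw [step3, Finset.sum_range_succ, aux_coeff_pow_eq_zero hnf (m+1) m (by omega), add_zero,
    pow_zero, coeff_one]

  abel

/-- two-sided inverse for `1 + f` with `constantCoeff f = 0`, over a noncommutative ring. -/
lemma aux_inv_one_add {B : Type*} [Ring B] (f : PowerSeries B)
    (hf : constantCoeff (R := B) f = 0) :
    ∃ g : PowerSeries B, (1 + f) * g = 1 ∧ g * (1 + f) = 1 := by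
  have hnf : constantCoeff (R := B) (-f) = 0 := by rw [map_neg, hf, neg_zero]
  refine ⟨PowerSeries.mk (fun m' => ∑ r ∈ Finset.range (m' + 1), coeff (R := B) m' ((-f) ^ r)), ?_, ?_⟩
  · ext m
    rw [add_mul, one_mul, map_add, aux_mul_S f hnf m, coeff_mk]
    abel
  · ext m
    rw [mul_add, mul_one, map_add, aux_S_mul f hnf m, coeff_mk]
    abel

section NLemmas
variable {k : Type*} [Field k] {B : Type*} [Ring B] [Algebra k B]
variable (x p : Fin 2 → B)
variable (N : MvPolynomial (Fin 2 ⊕ Fin 2) k →ₗ[k] B)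

private lemma mswap {u v : B} (w : B) (h : u * v = v * u) : u * (v * w) = v * (u * w) := by
  rw [← mul_assoc, h, mul_assoc]

lemma hN2 (hN : IsNormalOrdering x p N) (d : (Fin 2 ⊕ Fin 2) →₀ ℕ) :
    N (MvPolynomial.monomial d 1) =
      x 0 ^ d (Sum.inl 0) * (x 1 ^ d (Sum.inl 1) * (p 0 ^ d (Sum.inr 0) * (p 1 ^ d (Sum.inr 1) * 1))) := by
  rw [hN d]
  show (x 0 ^ d (Sum.inl 0) * (x 1 ^ d (Sum.inl 1) * 1)) * (p 0 ^ d (Sum.inr 0) * (p 1 ^ d (Sum.inr 1) * 1)) = _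
  simp only [mul_one, mul_assoc]

lemma NX_mul (hxx : ∀ i j, x i * x j = x j * x i) (hN : IsNormalOrdering x p N)
    (i : Fin 2) (q : MvPolynomial (Fin 2 ⊕ Fin 2) k) :
    N (MvPolynomial.X (Sum.inl i) * q) = x i * N q := by
  induction q using MvPolynomial.induction_on' with
  | add f g hf hg => rw [mul_add, map_add, map_add, hf, hg, mul_add]
  | monomial d a =>
    have hmono : (MvPolynomial.monomial d) a = a • (MvPolynomial.monomial d) (1:k) := by
      rw [MvPolynomial.smul_monomial, smul_eq_mul, mul_one]
    rw [hmono, Algebra.mul_smul_comm, map_smul, map_smul, Algebra.mul_smul_comm]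
    congr 1
    rw [MvPolynomial.X, MvPolynomial.monomial_mul, one_mul]
    rw [hN2 x p N hN, hN2 x p N hN]
    have h0 : ∀ z : Fin 2 ⊕ Fin 2, (Finsupp.single (Sum.inl i) 1 + d : (Fin 2 ⊕ Fin 2) →₀ ℕ) z
        = (Finsupp.single (Sum.inl i) 1 : (Fin 2 ⊕ Fin 2) →₀ ℕ) z + d z := fun z => Finsupp.add_apply _ _ _
    have hi2 : i = 0 ∨ i = 1 := by omega
    rcases hi2 with rfl | rfl
    · rw [h0, h0, h0, h0]
      simp only [Finsupp.single_apply, Sum.inl.injEq, reduceCtorEq, if_false,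
        show ((0:Fin 2) = 0) = True by simp, show ((0:Fin 2) = 1) = False by simp,
        if_true, zero_add, add_zero]
      rw [pow_add, pow_one, mul_assoc]
    · rw [h0, h0, h0, h0]
      simp only [Finsupp.single_apply, Sum.inl.injEq, reduceCtorEq, if_false,
        show ((1:Fin 2) = 0) = False by simp, show ((1:Fin 2) = 1) = True by simp,
        if_true, zero_add, add_zero]
      rw [pow_add, pow_one, mul_assoc]
      have hc : x 1 * x 0 ^ d (Sum.inl 0) = x 0 ^ d (Sum.inl 0) * x 1 :=
        (Commute.pow_right (hxx 1 0) _)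
      rw [mswap _ hc]
end NLemmas

section CommLemmas
variable {k : Type*} [Field k] {B : Type*} [Ring B] [Algebra k B]
variable (x p : Fin 2 → B)
variable (N : MvPolynomial (Fin 2 ⊕ Fin 2) k →ₗ[k] B)

lemma ppow (hpx : ∀ i j, p i * x j - x j * p i = if i = j then (1 : B) else 0) (j : Fin 2) :
    ∀ m : ℕ, p j ^ m * x j = x j * p j ^ m + m • p j ^ (m - 1) := by
  have hpxj : p j * x j = x j * p j + 1 := by
    have h := hpx j j
    rw [if_pos rfl] at h
    rw [sub_eq_iff_eq_add.mp h, add_comm]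
  intro m
  induction m with
  | zero => simp
  | succ m ih =>
    have h1 : p j ^ (m+1) * x j = p j * (p j ^ m * x j) := by
      rw [pow_succ', mul_assoc]
    rw [h1, ih, mul_add, ← mul_assoc, hpxj, add_mul, one_mul, mul_smul_comm]
    have h2 : m • (p j * p j ^ (m - 1)) = m • p j ^ m := by
      cases m with
      | zero => simp
      | succ n => rw [Nat.succ_sub_one, ← pow_succ']
    rw [h2, mul_assoc, ← pow_succ', succ_nsmul, Nat.succ_sub_one]
    abel

private lemma conj_step {x0 X W c : B} (h1 : x0 * X = X * x0) (h2 : W * x0 = x0 * W + c) :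
    (X * W) * x0 - x0 * (X * W) = X * c := by
  rw [mul_assoc, h2, mul_add, ← mul_assoc, ← h1, mul_assoc]
  abel

lemma Ncomm (hxx : ∀ i j, x i * x j = x j * x i)
    (hpx : ∀ i j, p i * x j - x j * p i = if i = j then (1 : B) else 0)
    (hN : IsNormalOrdering x p N) (j : Fin 2) (q : MvPolynomial (Fin 2 ⊕ Fin 2) k) :
    N q * x j - x j * N q = N (MvPolynomial.pderiv (Sum.inr j) q) := by
  induction q using MvPolynomial.induction_on' with
  | add f g hf hg =>
    rw [map_add, map_add, map_add, add_mul, mul_add, ← hf, ← hg]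
    abel
  | monomial d a =>
    rw [MvPolynomial.pderiv_monomial]
    have hmono : ∀ (d' : (Fin 2 ⊕ Fin 2) →₀ ℕ) (c : k),
        (MvPolynomial.monomial d') c = c • (MvPolynomial.monomial d') (1:k) := by
      intro d' c; rw [MvPolynomial.smul_monomial, smul_eq_mul, mul_one]
    rw [hmono d a, map_smul, smul_mul_assoc, mul_smul_comm, ← smul_sub,
      hmono _ (a * _), mul_smul, map_smul, map_smul]
    congr 1
    rw [Nat.cast_smul_eq_nsmul, hN2 x p N hN, hN2 x p N hN]
    simp only [mul_one]
    have htsub : ∀ z : Fin 2 ⊕ Fin 2,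
        (d - Finsupp.single (Sum.inr j) 1 : (Fin 2 ⊕ Fin 2) →₀ ℕ) z
          = d z - (Finsupp.single (Sum.inr j) 1 : (Fin 2 ⊕ Fin 2) →₀ ℕ) z :=
      fun z => Finsupp.tsub_apply _ _ _
    have hi2 : j = 0 ∨ j = 1 := by omega
    rcases hi2 with rfl | rfl
    · rw [htsub, htsub, htsub, htsub]
      simp only [Finsupp.single_apply, Sum.inr.injEq, reduceCtorEq, if_false,
        show ((0:Fin 2) = 0) = True by simp, show ((0:Fin 2) = 1) = False by simp,
        if_true, Nat.sub_zero]
      have c1 : p 1 ^ d (Sum.inr 1) * x 0 = x 0 * p 1 ^ d (Sum.inr 1) :=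
        Commute.pow_left (sub_eq_zero.mp (by simpa using hpx 1 0)) _
      have hx01 : x 0 * (x 0 ^ d (Sum.inl 0) * x 1 ^ d (Sum.inl 1))
          = (x 0 ^ d (Sum.inl 0) * x 1 ^ d (Sum.inl 1)) * x 0 :=
        (Commute.mul_right (Commute.pow_right (Commute.refl (x 0)) _)
          (Commute.pow_right (hxx 0 1) _))
      have hP : (p 0 ^ d (Sum.inr 0) * p 1 ^ d (Sum.inr 1)) * x 0
          = x 0 * (p 0 ^ d (Sum.inr 0) * p 1 ^ d (Sum.inr 1))
            + d (Sum.inr 0) • (p 0 ^ (d (Sum.inr 0) - 1) * p 1 ^ d (Sum.inr 1)) := by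
        rw [mul_assoc, c1, ← mul_assoc, ppow x p hpx 0, add_mul, smul_mul_assoc, mul_assoc]
      have := conj_step hx01 hP
      rw [mul_smul_comm] at this
      simp only [← mul_assoc] at this ⊢
      exact this
    · rw [htsub, htsub, htsub, htsub]
      simp only [Finsupp.single_apply, Sum.inr.injEq, reduceCtorEq, if_false,
        show ((1:Fin 2) = 0) = False by simp, show ((1:Fin 2) = 1) = True by simp,
        if_true, Nat.sub_zero]
      have c1 : p 0 ^ d (Sum.inr 0) * x 1 = x 1 * p 0 ^ d (Sum.inr 0) :=
        Commute.pow_left (sub_eq_zero.mp (by simpa using hpx 0 1)) _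
      have hx01 : x 1 * (x 0 ^ d (Sum.inl 0) * x 1 ^ d (Sum.inl 1))
          = (x 0 ^ d (Sum.inl 0) * x 1 ^ d (Sum.inl 1)) * x 1 :=
        (Commute.mul_right (Commute.pow_right (hxx 1 0) _)
          (Commute.pow_right (Commute.refl (x 1)) _))
      have hP : (p 0 ^ d (Sum.inr 0) * p 1 ^ d (Sum.inr 1)) * x 1
          = x 1 * (p 0 ^ d (Sum.inr 0) * p 1 ^ d (Sum.inr 1))
            + d (Sum.inr 1) • (p 0 ^ d (Sum.inr 0) * p 1 ^ (d (Sum.inr 1) - 1)) := by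
        rw [mul_assoc, ppow x p hpx 1, mul_add, ← mul_assoc, c1, mul_assoc, mul_smul_comm]
      have := conj_step hx01 hP
      rw [mul_smul_comm] at this
      simp only [← mul_assoc] at this ⊢
      exact this
end CommLemmas


section PSLemmas
variable {k : Type*} [Field k] [CharZero k] {B : Type*} [Ring B] [Algebra k B]
variable (x p : Fin 2 → B)
variable (N : MvPolynomial (Fin 2 ⊕ Fin 2) k →ₗ[k] B)

local notation "MvP" => MvPolynomial (Fin 2 ⊕ Fin 2) k

lemma N_one (hN : IsNormalOrdering x p N) : N 1 = 1 := by
  have h := hN2 x p N hN 0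
  simpa using h

lemma lift_coeff (f : PowerSeries MvP) (m : ℕ) :
    PowerSeries.coeff (R := B) m (liftFun N f) = N (PowerSeries.coeff (R := MvP) m f) := by
  rw [liftFun, PowerSeries.coeff_mk]

lemma pd_coeff (j : Fin 2) (f : PowerSeries MvP) (m : ℕ) :
    PowerSeries.coeff (R := MvP) m (pdLift j f) =
      MvPolynomial.pderiv (Sum.inr j) (PowerSeries.coeff (R := MvP) m f) := by
  rw [pdLift, PowerSeries.coeff_mk]

lemma lift_add (f g : PowerSeries MvP) :
    liftFun N (f + g) = liftFun N f + liftFun N g := by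
  ext m
  rw [map_add, lift_coeff, lift_coeff, lift_coeff, map_add, map_add]

lemma lift_X_mul (hxx : ∀ i j, x i * x j = x j * x i) (hN : IsNormalOrdering x p N)
    (i : Fin 2) (f : PowerSeries MvP) :
    liftFun N (PowerSeries.C (R := MvP) (MvPolynomial.X (Sum.inl i)) * f)
      = PowerSeries.C (R := B) (x i) * liftFun N f := by
  ext m
  rw [lift_coeff, PowerSeries.coeff_C_mul, PowerSeries.coeff_C_mul, lift_coeff,
    NX_mul x p N hxx hN]

lemma lift_map_mul (g : PowerSeries k) (f : PowerSeries MvP) :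
    liftFun N (PowerSeries.map (MvPolynomial.C) g * f)
      = PowerSeries.map (algebraMap k B) g * liftFun N f := by
  ext m
  rw [lift_coeff, PowerSeries.coeff_mul, PowerSeries.coeff_mul, map_sum]
  apply Finset.sum_congr rfl
  rintro ⟨a, b⟩ _
  rw [PowerSeries.coeff_map, PowerSeries.coeff_map, lift_coeff,
    ← MvPolynomial.smul_eq_C_mul, map_smul, Algebra.smul_def]

lemma lift_comm (hxx : ∀ i j, x i * x j = x j * x i)
    (hpx : ∀ i j, p i * x j - x j * p i = if i = j then (1 : B) else 0)
    (hN : IsNormalOrdering x p N) (j : Fin 2) (g : PowerSeries MvP) :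
    liftFun N g * PowerSeries.C (R := B) (x j)
      = PowerSeries.C (R := B) (x j) * liftFun N g + liftFun N (pdLift j g) := by
  ext m
  rw [map_add, PowerSeries.coeff_mul_C, PowerSeries.coeff_C_mul, lift_coeff, lift_coeff,
    pd_coeff]
  have h2 := sub_eq_iff_eq_add.mp (Ncomm x p N hxx hpx hN j (PowerSeries.coeff (R := MvP) m g))
  exact h2.trans (add_comm _ _)

lemma pd_add (j : Fin 2) (f g : PowerSeries MvP) :
    pdLift j (f + g) = pdLift j f + pdLift j g := by
  apply PowerSeries.ext; intro m
  rw [map_add, pd_coeff, pd_coeff, pd_coeff, map_add, map_add]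

lemma pd_mul (j : Fin 2) (f g : PowerSeries MvP) :
    pdLift j (f * g) = pdLift j f * g + f * pdLift j g := by
  apply PowerSeries.ext; intro m
  rw [map_add, pd_coeff, PowerSeries.coeff_mul, PowerSeries.coeff_mul, PowerSeries.coeff_mul,
    map_sum, ← Finset.sum_add_distrib]
  apply Finset.sum_congr rfl
  rintro ⟨a, b⟩ _
  rw [MvPolynomial.pderiv_mul, pd_coeff, pd_coeff]

lemma pd_pow (j : Fin 2) (M : PowerSeries MvP) (r : ℕ) :
    pdLift j (M ^ (r + 1)) = (r + 1) • (pdLift j M * M ^ r) := by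
  induction r with
  | zero => rw [pow_one, pow_zero, mul_one, zero_add, one_smul]
  | succ r ih =>
    rw [pow_succ', pd_mul, ih, mul_smul_comm]
    have h1 : M * (pdLift j M * M ^ r) = pdLift j M * M ^ (r+1) := by ring
    rw [h1, succ_nsmul (pdLift j M * M ^ (r+1)) (r+1)]
    abel
end PSLemmas

section ExpLemmas
variable {k : Type*} [Field k] [CharZero k]

local notation "MvP" => MvPolynomial (Fin 2 ⊕ Fin 2) k

lemma exp_coeff (a : PowerSeries MvP) (m : ℕ) :
    PowerSeries.coeff (R := MvP) m (psExp a)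
      = ∑ r ∈ Finset.range (m + 1), (r.factorial : ℚ)⁻¹ • (PowerSeries.coeff (R := MvP) m (a ^ r)) := by
  rw [psExp, PowerSeries.coeff_mk]

lemma pd_one (j : Fin 2) : pdLift j (1 : PowerSeries MvP) = 0 := by
  apply PowerSeries.ext; intro m
  rw [pd_coeff, map_zero, PowerSeries.coeff_one]
  split_ifs
  · exact Derivation.map_one_eq_zero _
  · exact map_zero _

lemma pderiv_qsmul {σ : Type*} (i : σ) (q : ℚ) (P : MvPolynomial σ k) :
    MvPolynomial.pderiv i (q • P) = q • MvPolynomial.pderiv i P := by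
  rw [← algebraMap_smul k q P, Derivation.map_smul, algebraMap_smul]

lemma pd_exp (j : Fin 2) (M : PowerSeries MvP) (hM : PowerSeries.constantCoeff (R := MvP) M = 0) :
    pdLift j (psExp M) = pdLift j M * psExp M := by
  apply PowerSeries.ext; intro m
  rw [pd_coeff, exp_coeff, map_sum]
  have hterm : ∀ r ∈ Finset.range (m+1),
      MvPolynomial.pderiv (Sum.inr j) ((r.factorial : ℚ)⁻¹ • (PowerSeries.coeff (R := MvP) m (M ^ r)))
        = (r.factorial : ℚ)⁻¹ • (PowerSeries.coeff (R := MvP) m (pdLift j (M ^ r))) := by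
    intro r _
    rw [pderiv_qsmul, pd_coeff]
  rw [Finset.sum_congr rfl hterm, Finset.sum_range_succ']
  have hzero : ((Nat.factorial 0 : ℚ))⁻¹ • (PowerSeries.coeff (R := MvP) m (pdLift j ((M : PowerSeries MvP) ^ 0))) = 0 := by
    rw [pow_zero, pd_one, map_zero, smul_zero]
  rw [hzero, add_zero]
  have hterm2 : ∀ s ∈ Finset.range m,
      (((s+1).factorial : ℚ))⁻¹ • (PowerSeries.coeff (R := MvP) m (pdLift j (M ^ (s+1))))
        = ((s.factorial : ℚ))⁻¹ • (PowerSeries.coeff (R := MvP) m (pdLift j M * M ^ s)) := by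
    intro s _
    rw [pd_pow, map_nsmul, ← Nat.cast_smul_eq_nsmul ℚ, smul_smul]
    congr 1
    rw [Nat.factorial_succ]
    have hne : ((s+1 : ℕ) : ℚ) ≠ 0 := by positivity
    have hne2 : ((s.factorial : ℕ) : ℚ) ≠ 0 := by positivity
    push_cast
    field_simp
  rw [Finset.sum_congr rfl hterm2]
  -- now the RHS
  rw [PowerSeries.coeff_mul]
  have hrhs : ∀ q ∈ Finset.HasAntidiagonal.antidiagonal m,
      PowerSeries.coeff (R := MvP) q.1 (pdLift j M) * PowerSeries.coeff (R := MvP) q.2 (psExp M)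
        = ∑ r ∈ Finset.range (m+1),
            (r.factorial : ℚ)⁻¹ • (PowerSeries.coeff (R := MvP) q.1 (pdLift j M) * PowerSeries.coeff (R := MvP) q.2 (M ^ r)) := by
    rintro ⟨a, b⟩ hab
    rw [Finset.HasAntidiagonal.mem_antidiagonal] at hab
    rw [exp_coeff, Finset.mul_sum]
    have : ∀ r ∈ Finset.range (b+1),
        PowerSeries.coeff (R := MvP) a (pdLift j M) * ((r.factorial : ℚ)⁻¹ • PowerSeries.coeff (R := MvP) b (M ^ r))
          = (r.factorial : ℚ)⁻¹ • (PowerSeries.coeff (R := MvP) a (pdLift j M) * PowerSeries.coeff (R := MvP) b (M ^ r)) := by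
      intro r _; rw [mul_smul_comm]
    rw [Finset.sum_congr rfl this]
    apply Finset.sum_subset
    · intro r hr; rw [Finset.mem_range] at *; omega
    · intro r hr hr'
      rw [Finset.mem_range] at hr hr'
      rw [aux_coeff_pow_eq_zero hM r b (by omega), mul_zero, smul_zero]
  rw [Finset.sum_congr rfl hrhs, Finset.sum_comm]
  have hcollect : ∀ r ∈ Finset.range (m+1),
      (∑ q ∈ Finset.HasAntidiagonal.antidiagonal m,
        (r.factorial : ℚ)⁻¹ • (PowerSeries.coeff (R := MvP) q.1 (pdLift j M) * PowerSeries.coeff (R := MvP) q.2 (M ^ r)))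
      = (r.factorial : ℚ)⁻¹ • PowerSeries.coeff (R := MvP) m (pdLift j M * M ^ r) := by
    intro r _
    rw [← Finset.smul_sum, PowerSeries.coeff_mul]
  rw [Finset.sum_congr rfl hcollect, Finset.sum_range_succ]
  have htop : PowerSeries.coeff (R := MvP) m (pdLift j M * M ^ m) = 0 := by
    rw [PowerSeries.coeff_mul]
    apply Finset.sum_eq_zero
    rintro ⟨a, b⟩ hab
    rw [Finset.HasAntidiagonal.mem_antidiagonal] at hab
    rcases Nat.lt_or_ge b m with hb | hb
    · rw [aux_coeff_pow_eq_zero hM m b hb, mul_zero]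
    · have ha : a = 0 := by omega
      subst ha
      rw [PowerSeries.coeff_zero_eq_constantCoeff] at *
      have : PowerSeries.constantCoeff (R := MvP) (pdLift j M) = 0 := by
        rw [← PowerSeries.coeff_zero_eq_constantCoeff, pd_coeff,
          PowerSeries.coeff_zero_eq_constantCoeff, hM, map_zero]
      rw [this, zero_mul]
  rw [htop, smul_zero, add_zero]
end ExpLemmas

section PhiLemmas
variable {k : Type*} [Field k] [CharZero k] {B : Type*} [Ring B] [Algebra k B]
variable (x p : Fin 2 → B)
variable (N : MvPolynomial (Fin 2 ⊕ Fin 2) k →ₗ[k] B)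

local notation "MvP" => MvPolynomial (Fin 2 ⊕ Fin 2) k

/-- the exponent series in `phiMat` -/
def MA (A : Matrix (Fin 2) (Fin 2) (PowerSeries k)) : PowerSeries MvP :=
  ∑ i : Fin 2, ∑ j : Fin 2,
    PowerSeries.C (R := MvP) (MvPolynomial.X (Sum.inl i) * MvPolynomial.X (Sum.inr j)) *
      PowerSeries.map (MvPolynomial.C) ((A - 1) i j)

lemma phiMat_eq (A : Matrix (Fin 2) (Fin 2) (PowerSeries k)) :
    phiMat N A = liftFun N (psExp (MA A)) := rfl

lemma Amatsub_const {A : Matrix (Fin 2) (Fin 2) (PowerSeries k)} (hA : IsOneModH A)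
    (i j : Fin 2) : PowerSeries.constantCoeff (R := k) ((A - 1) i j) = 0 := by
  have h1 : (A - 1) i j = A i j - (1 : Matrix (Fin 2) (Fin 2) (PowerSeries k)) i j := by
    rw [Matrix.sub_apply]
  rw [h1, map_sub, hA i j, Matrix.one_apply]
  split_ifs with h
  · rw [map_one, sub_self]
  · rw [map_zero, sub_self]

lemma MA_const {A : Matrix (Fin 2) (Fin 2) (PowerSeries k)} (hA : IsOneModH A) :
    PowerSeries.constantCoeff (R := MvP) (MA A) = 0 := by
  rw [MA, map_sum]
  apply Finset.sum_eq_zero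
  intro i _
  rw [map_sum]
  apply Finset.sum_eq_zero
  intro j _
  rw [map_mul, PowerSeries.constantCoeff_C]
  have : PowerSeries.constantCoeff (R := MvP) (PowerSeries.map (MvPolynomial.C) ((A - 1) i j))
      = MvPolynomial.C (PowerSeries.constantCoeff (R := k) ((A - 1) i j)) := by
    rw [← PowerSeries.coeff_zero_eq_constantCoeff, PowerSeries.coeff_map,
      PowerSeries.coeff_zero_eq_constantCoeff]
  rw [this, Amatsub_const hA, map_zero, mul_zero]

lemma pd_C_mul_map (j : Fin 2) (q : MvP) (g : PowerSeries k) :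
    pdLift j (PowerSeries.C (R := MvP) q * PowerSeries.map (MvPolynomial.C) g)
      = PowerSeries.C (R := MvP) (MvPolynomial.pderiv (Sum.inr j) q) *
          PowerSeries.map (MvPolynomial.C) g := by
  apply PowerSeries.ext; intro m
  rw [pd_coeff, PowerSeries.coeff_C_mul, PowerSeries.coeff_C_mul, PowerSeries.coeff_map,
    MvPolynomial.pderiv_mul, MvPolynomial.pderiv_C, mul_zero, add_zero]

lemma pderiv_XX (i j' j : Fin 2) :
    MvPolynomial.pderiv (σ := Fin 2 ⊕ Fin 2) (R := k) (Sum.inr j)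
        (MvPolynomial.X (Sum.inl i) * MvPolynomial.X (Sum.inr j'))
      = if j' = j then MvPolynomial.X (Sum.inl i) else 0 := by
  rw [MvPolynomial.pderiv_mul, MvPolynomial.pderiv_X_of_ne (by simp), zero_mul, zero_add]
  split_ifs with h
  · subst h; rw [MvPolynomial.pderiv_X_self, mul_one]
  · rw [MvPolynomial.pderiv_X_of_ne (by simp [h]), mul_zero]

lemma MA_pd (j : Fin 2) (A : Matrix (Fin 2) (Fin 2) (PowerSeries k)) :
    pdLift j (MA A) = ∑ i : Fin 2,
      PowerSeries.C (R := MvP) (MvPolynomial.X (Sum.inl i)) *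
        PowerSeries.map (MvPolynomial.C) ((A - 1) i j) := by
  simp only [MA, Fin.sum_univ_two]
  rw [pd_add, pd_add, pd_add]
  simp only [pd_C_mul_map, pderiv_XX]
  have hj : j = 0 ∨ j = 1 := by omega
  rcases hj with rfl | rfl <;>
    simp only [if_true, show ((0:Fin 2) = 1) = False by simp, show ((1:Fin 2) = 0) = False by simp,
      if_false, map_zero, zero_mul, add_zero, zero_add]
end PhiLemmas

section PhiComm
variable {k : Type*} [Field k] [CharZero k] {B : Type*} [Ring B] [Algebra k B]
variable (x p : Fin 2 → B)
variable (N : MvPolynomial (Fin 2 ⊕ Fin 2) k →ₗ[k] B)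

local notation "MvP" => MvPolynomial (Fin 2 ⊕ Fin 2) k

lemma phi_const (hN : IsNormalOrdering x p N) (A : Matrix (Fin 2) (Fin 2) (PowerSeries k)) :
    PowerSeries.constantCoeff (R := B) (phiMat N A) = 1 := by
  rw [phiMat_eq, ← PowerSeries.coeff_zero_eq_constantCoeff, lift_coeff, exp_coeff,
    Finset.sum_range_one, pow_zero]
  have h1 : PowerSeries.coeff (R := MvP) 0 (1 : PowerSeries MvP) = 1 := by
    rw [PowerSeries.coeff_zero_eq_constantCoeff, map_one]
  rw [h1, Nat.factorial_zero, Nat.cast_one, inv_one, one_smul, N_one x p N hN]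

lemma phi_comm (hxx : ∀ i j, x i * x j = x j * x i)
    (hpx : ∀ i j, p i * x j - x j * p i = if i = j then (1 : B) else 0)
    (hN : IsNormalOrdering x p N)
    {A : Matrix (Fin 2) (Fin 2) (PowerSeries k)} (hA : IsOneModH A) (j : Fin 2) :
    phiMat N A * PowerSeries.C (R := B) (x j)
      = (∑ i : Fin 2, PowerSeries.C (R := B) (x i) * PowerSeries.map (algebraMap k B) (A i j)) *
          phiMat N A := by
  rw [phiMat_eq, lift_comm x p N hxx hpx hN j (psExp (MA A)),
    pd_exp j (MA A) (MA_const hA), MA_pd, Fin.sum_univ_two, add_mul, mul_assoc, mul_assoc,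
    lift_add, lift_X_mul x p N hxx hN, lift_X_mul x p N hxx hN, lift_map_mul, lift_map_mul,
    Fin.sum_univ_two, add_mul]
  have hj : j = 0 ∨ j = 1 := by omega
  rcases hj with rfl | rfl
  · have e0 : (A - 1) 0 0 = A 0 0 - 1 := by simp [Matrix.sub_apply, Matrix.one_apply]
    have e1 : (A - 1) 1 0 = A 1 0 := by simp [Matrix.sub_apply, Matrix.one_apply]
    rw [e0, e1, map_sub, map_one]
    simp only [sub_mul, mul_sub, one_mul, mul_assoc]
    abel
  · have e0 : (A - 1) 0 1 = A 0 1 := by simp [Matrix.sub_apply, Matrix.one_apply]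
    have e1 : (A - 1) 1 1 = A 1 1 - 1 := by simp [Matrix.sub_apply, Matrix.one_apply]
    rw [e0, e1, map_sub, map_one]
    simp only [sub_mul, mul_sub, one_mul, mul_assoc]
    abel
end PhiComm

/-- over `k[ε]/(ε³)` (encoded by a central element `ε` with `ε³ = 0`),
with `R := φ(A)·exp(ε·N(f₁ + ε f₂))` where the exponential is the finite sum
`1 + ε·N(f₁+εf₂) + (ε²/2)·N(f₁)²`, the element `R` is invertible and
`R·x_j·R⁻¹ = Σ_i x_i A_{ij} + ε·φ(A)·N(∂_{p_j}f₁ + ε ∂_{p_j}f₂)·φ(A)⁻¹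
  + (ε²/2)·φ(A)·[N(f₁), N(∂_{p_j}f₁)]·φ(A)⁻¹` (equality modulo `ε³` is exact here
since `ε³ = 0`). -/
theorem statement6 {k : Type*} [Field k] [CharZero k]
    {B : Type*} [Ring B] [Algebra k B]
    (x p : Fin 2 → B)
    (hxx : ∀ i j, x i * x j = x j * x i)
    (hpp : ∀ i j, p i * p j = p j * p i)
    (hpx : ∀ i j, p i * x j - x j * p i = if i = j then (1 : B) else 0)
    (ε : B) (hεcen : ∀ b : B, ε * b = b * ε) (hε3 : ε ^ 3 = 0)
    (N : MvPolynomial (Fin 2 ⊕ Fin 2) k →ₗ[k] B) (hN : IsNormalOrdering x p N)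
    (A : Matrix (Fin 2) (Fin 2) (PowerSeries k)) (hA : IsOneModH A)
    (f₁ f₂ : PowerSeries (MvPolynomial (Fin 2 ⊕ Fin 2) k)) :
    let Ce : PowerSeries B := PowerSeries.C (R := B) ε
    let half : PowerSeries B := PowerSeries.C (R := B) (algebraMap k B (2⁻¹ : k))
    let φA : PowerSeries B := phiMat N A
    let R : PowerSeries B :=
      φA * (1 + Ce * (liftFun N f₁ + Ce * liftFun N f₂) +
        half * Ce ^ 2 * (liftFun N f₁) ^ 2)
    ∃ Rinv φAinv : PowerSeries B,
      R * Rinv = 1 ∧ Rinv * R = 1 ∧ φA * φAinv = 1 ∧ φAinv * φA = 1 ∧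
      ∀ j : Fin 2,
        R * PowerSeries.C (R := B) (x j) * Rinv =
          (∑ i : Fin 2, PowerSeries.C (R := B) (x i) * PowerSeries.map (algebraMap k B) (A i j)) +
          Ce * (φA * (liftFun N (pdLift j f₁) + Ce * liftFun N (pdLift j f₂)) * φAinv) +
          half * Ce ^ 2 *
            (φA * (liftFun N f₁ * liftFun N (pdLift j f₁) -
                liftFun N (pdLift j f₁) * liftFun N f₁) * φAinv) := by
  intro Ce half φA R
  have hφA : φA = phiMat N A := rfl
  -- φA is invertible
  have hφconst : PowerSeries.constantCoeff (R := B) (φA - 1) = 0 := by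
    rw [map_sub, hφA, phi_const x p N hN A, map_one, sub_self]
  obtain ⟨φAinv, hφ1, hφ2⟩ := aux_inv_one_add (φA - 1) hφconst
  rw [show (1 : PowerSeries B) + (φA - 1) = φA by abel] at hφ1 hφ2
  -- abbreviations
  set F₁ : PowerSeries B := liftFun N f₁ with hF₁def
  set F₂ : PowerSeries B := liftFun N f₂ with hF₂def
  -- centrality facts
  have hc : ∀ g : PowerSeries B, Ce * g = g * Ce := by
    intro g; ext m
    rw [PowerSeries.coeff_C_mul, PowerSeries.coeff_mul_C, hεcen]
  have hh : ∀ g : PowerSeries B, half * g = g * half := by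
    intro g; ext m
    rw [PowerSeries.coeff_C_mul, PowerSeries.coeff_mul_C, Algebra.commutes]
  have swc : ∀ a g : PowerSeries B, a * (Ce * g) = Ce * (a * g) := by
    intro a g; rw [← mul_assoc, ← hc a, mul_assoc]
  have swh : ∀ a g : PowerSeries B, a * (half * g) = half * (a * g) := by
    intro a g; rw [← mul_assoc, ← hh a, mul_assoc]
  set w : PowerSeries B := half * Ce ^ 2 with hwdef
  have sww : ∀ a g : PowerSeries B, a * (w * g) = w * (a * g) := by
    intro a g
    have h1 : w * g = half * (Ce * (Ce * g)) := by rw [hwdef, pow_two, mul_assoc, mul_assoc]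
    have h2 : w * (a * g) = half * (Ce * (Ce * (a * g))) := by
      rw [hwdef, pow_two, mul_assoc, mul_assoc]
    rw [h1, swh a, swc a, swc a, h2]
  have hcsym : ∀ a : PowerSeries B, a * Ce = Ce * a := fun a => (hc a).symm
  have hwsym : ∀ a : PowerSeries B, a * w = w * a := by
    intro a; have h := sww a 1; rw [mul_one, mul_one] at h; exact h
  have hCe3 : Ce * (Ce * Ce) = 0 := by
    have h : Ce * (Ce * Ce) = Ce ^ 3 := by rw [pow_succ, pow_two, mul_assoc]
    rw [h, ← map_pow, hε3, map_zero]
  have hcw : Ce * w = 0 := by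
    rw [hwdef, swh Ce (Ce^2), pow_two, hCe3, mul_zero]
  have hwc : w * Ce = 0 := by rw [← hc w, hcw]
  have hww : w * w = 0 := by
    rw [hwdef, mul_assoc half (Ce^2) w, pow_two, mul_assoc Ce Ce w, hcw, mul_zero, mul_zero]
  have hhalf2 : half + half = 1 := by
    show PowerSeries.C (R := B) (algebraMap k B (2⁻¹:k)) + PowerSeries.C (R := B) (algebraMap k B (2⁻¹:k)) = 1
    rw [← map_add, ← map_add, show (2⁻¹ + 2⁻¹ : k) = 1 by norm_num, map_one, map_one]
  have hcc : Ce * Ce = w + w := by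
    have h1 : w + w = (half + half) * Ce ^ 2 := by rw [add_mul]
    rw [h1, hhalf2, one_mul, pow_two]
  -- simp rules for scalar collisions
  have rcc : ∀ g : PowerSeries B, Ce * (Ce * g) = w * g + w * g := by
    intro g; rw [← mul_assoc, hcc, add_mul]
  have rcw : ∀ g : PowerSeries B, Ce * (w * g) = 0 := by
    intro g; rw [← mul_assoc, hcw, zero_mul]
  have rwc : ∀ g : PowerSeries B, w * (Ce * g) = 0 := by
    intro g; rw [← mul_assoc, hwc, zero_mul]
  have rww : ∀ g : PowerSeries B, w * (w * g) = 0 := by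
    intro g; rw [← mul_assoc, hww, zero_mul]
  -- the epsilon factor and its inverse
  set u : PowerSeries B := Ce * (F₁ + Ce * F₂) + half * Ce ^ 2 * F₁ ^ 2 with hudef
  have hu : u = Ce * F₁ + (w + w) * F₂ + w * (F₁ * F₁) := by
    rw [hudef, mul_add, ← mul_assoc Ce Ce F₂, hcc, ← hwdef, pow_two, add_assoc]
  have hu3 : u * (u * u) = 0 := by
    rw [hu]
    simp only [add_mul, mul_add, mul_assoc, swc F₁, swc F₂, sww F₁, sww F₂,
      hcsym F₁, hcsym F₂, hwsym F₁, hwsym F₂,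
      rcc, rcw, rwc, rww, mul_zero, zero_mul, add_zero, zero_add]
    
  set Einv : PowerSeries B := 1 - u + u * u with hEinvdef
  have hE1 : (1 + Ce * (F₁ + Ce * F₂) + half * Ce ^ 2 * F₁ ^ 2) = 1 + u := by
    rw [hudef]; abel
  have hEinv1 : (1 + u) * Einv = 1 := by
    have hexp : (1 + u) * Einv = 1 + u * (u * u) := by
      rw [hEinvdef]; noncomm_ring
    rw [hexp, hu3, add_zero]
  have hEinv2 : Einv * (1 + u) = 1 := by
    have hexp : Einv * (1 + u) = 1 + u * (u * u) := by
      rw [hEinvdef]; noncomm_ring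
    rw [hexp, hu3, add_zero]
  refine ⟨Einv * φAinv, φAinv, ?_, ?_, hφ1, hφ2, ?_⟩
  · show φA * (1 + Ce * (F₁ + Ce * F₂) + half * Ce ^ 2 * F₁ ^ 2) * (Einv * φAinv) = 1
    rw [hE1, mul_assoc, ← mul_assoc (1 + u) Einv φAinv, hEinv1, one_mul, hφ1]
  · show (Einv * φAinv) * (φA * (1 + Ce * (F₁ + Ce * F₂) + half * Ce ^ 2 * F₁ ^ 2)) = 1
    rw [hE1, mul_assoc, ← mul_assoc φAinv φA (1 + u), hφ2, one_mul, hEinv2]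
  · intro j
    set X : PowerSeries B := PowerSeries.C (R := B) (x j) with hXdef
    set D₁ : PowerSeries B := liftFun N (pdLift j f₁) with hD₁def
    set D₂ : PowerSeries B := liftFun N (pdLift j f₂) with hD₂def
    have hF₁X : F₁ * X = X * F₁ + D₁ := lift_comm x p N hxx hpx hN j f₁
    have hF₂X : F₂ * X = X * F₂ + D₂ := lift_comm x p N hxx hpx hN j f₂
    have hF₁Xg : ∀ g : PowerSeries B, F₁ * (X * g) = X * (F₁ * g) + D₁ * g := by
      intro g; rw [← mul_assoc, hF₁X, add_mul, mul_assoc]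
    have hF₂Xg : ∀ g : PowerSeries B, F₂ * (X * g) = X * (F₂ * g) + D₂ * g := by
      intro g; rw [← mul_assoc, hF₂X, add_mul, mul_assoc]
    -- the key conjugation identity, in w-normal form
    have key : (1 + u) * X = (X + Ce * D₁ + (w + w) * D₂ + w * (F₁ * D₁ - D₁ * F₁)) * (1 + u) := by
      rw [hu]
      simp only [add_mul, mul_add, sub_mul, mul_sub, mul_assoc, mul_one, one_mul,
        hF₁X, hF₂X, hF₁Xg, hF₂Xg,
        swc F₁, swc F₂, swc X, swc D₁, swc D₂, sww F₁, sww F₂, sww X, sww D₁, sww D₂,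
        hcsym F₁, hcsym F₂, hcsym X, hcsym D₁, hcsym D₂,
        hwsym F₁, hwsym F₂, hwsym X, hwsym D₁, hwsym D₂,
        rcc, rcw, rwc, rww, mul_zero, zero_mul, add_zero, zero_add]
      abel
    -- assemble
    have hT : X + Ce * D₁ + (w + w) * D₂ + w * (F₁ * D₁ - D₁ * F₁)
        = X + Ce * (D₁ + Ce * D₂) + w * (F₁ * D₁ - D₁ * F₁) := by
      rw [mul_add Ce D₁ (Ce * D₂), ← mul_assoc Ce Ce D₂, hcc]
      abel
    set T : PowerSeries B := X + Ce * (D₁ + Ce * D₂) + w * (F₁ * D₁ - D₁ * F₁) with hTdef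
    have key2 : (1 + u) * X = T * (1 + u) := by rw [key, hT]
    show φA * (1 + Ce * (F₁ + Ce * F₂) + half * Ce ^ 2 * F₁ ^ 2) * X * (Einv * φAinv) = _
    rw [hE1]
    have hconj : φA * (1 + u) * X * (Einv * φAinv) = φA * T * φAinv := by
      rw [mul_assoc φA (1+u) X, key2, ← mul_assoc φA T (1+u),
        mul_assoc (φA * T) (1+u) (Einv * φAinv), ← mul_assoc (1+u) Einv φAinv, hEinv1, one_mul]
    have px : φA * X * φAinv
        = ∑ i : Fin 2, PowerSeries.C (R := B) (x i) * PowerSeries.map (algebraMap k B) (A i j) := by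
      rw [hXdef, hφA, phi_comm x p N hxx hpx hN hA j, mul_assoc, ← hφA, hφ1, mul_one]
    have pc : φA * (Ce * (D₁ + Ce * D₂)) * φAinv = Ce * (φA * (D₁ + Ce * D₂) * φAinv) := by
      rw [swc φA (D₁ + Ce * D₂), mul_assoc Ce (φA * (D₁ + Ce * D₂)) φAinv]
    have pw : φA * (w * (F₁ * D₁ - D₁ * F₁)) * φAinv
        = w * (φA * (F₁ * D₁ - D₁ * F₁) * φAinv) := by
      rw [sww φA (F₁ * D₁ - D₁ * F₁), mul_assoc w (φA * (F₁ * D₁ - D₁ * F₁)) φAinv]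
    rw [hconj, hTdef, mul_add φA, mul_add φA, add_mul, add_mul, px, pc, pw]
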